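/- arXiv:2502.05064 — 2 statements merged into one kernel-verified Lean document; each statement's English description precedes it below -/
import Mathlib

section
/- Let G be a group and x, y ∈ G elements satisfying x = [x^l, x^y] (where [u,v] = u⁻¹v⁻¹uv and x^y = y⁻¹xy) for some integer l. Then x lies in every term of the derived series of G; in particular, if x ≠ 1 then G is not residually solvable. -/
/-- If `x = [x^l, x^y]`, then `x` lies in every term of the derived series of `G`;
in particular, if `x ≠ 1` then `G` is not residually solvable (intersection of
the derived series is nontrivial). -/
theorem stmt1 {G : Type*} [Group G] (x y : G) (l : ℤ)
    (hrel : x = (x ^ l)⁻¹ * (y⁻¹ * x * y)⁻¹ * (x ^ l) * (y⁻¹ * x * y)) :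
    (∀ n : ℕ, x ∈ derivedSeries G n) ∧
      (x ≠ 1 → ¬ (∀ g : G, (∀ n : ℕ, g ∈ derivedSeries G n) → g = 1)) := by
  have h : ∀ n : ℕ, x ∈ derivedSeries G n := by
    intro n
    induction n with
    | zero => trivial
    | succ n ih =>
      have h1 : (x ^ l)⁻¹ ∈ derivedSeries G n := inv_mem (zpow_mem ih l)
      have h2 : (y⁻¹ * x * y)⁻¹ ∈ derivedSeries G n := by
        refine inv_mem ?_
        have := (derivedSeries_normal G n).conj_mem x ih y⁻¹
        simpa [mul_assoc] using this
      open scoped commutatorElement in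
      have hc : ⁅(x ^ l)⁻¹, (y⁻¹ * x * y)⁻¹⁆ = (x ^ l)⁻¹ * (y⁻¹ * x * y)⁻¹ * (x ^ l) * (y⁻¹ * x * y) := by
        group
      open scoped commutatorElement in
      rw [derivedSeries_succ, hrel, ← hc]
      exact Subgroup.commutator_mem_commutator h1 h2
  exact ⟨h, fun hx hall => hx (hall x h)⟩
end

section
/- In the one-relator group G(l,k) = ⟨a, b ∣ (b⁻¹ab)⁻¹ aˡ (b⁻¹ab) = aᵏ⟩ with k = l + 1 and l ≠ 0, the element a satisfies a = [aˡ, a^b], hence a lies in the intersection of all derived subgroups of G(l,k). -/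
namespace Stmt2

/-- The free group generators `a` and `b`. -/
def a : FreeGroup (Fin 2) := FreeGroup.of 0
def b : FreeGroup (Fin 2) := FreeGroup.of 1

/-- The relator `((b⁻¹ab)⁻¹ aˡ (b⁻¹ab)) a⁻ᵏ` of `G(l,k)`. -/
def rel (l k : ℤ) : FreeGroup (Fin 2) :=
  (b⁻¹ * a * b)⁻¹ * a ^ l * (b⁻¹ * a * b) * a ^ (-k)

/-- The one-relator group `G(l,k) = ⟨a, b ∣ (b⁻¹ab)⁻¹ aˡ (b⁻¹ab) = aᵏ⟩`. -/
abbrev G (l k : ℤ) := PresentedGroup ({rel l k} : Set (FreeGroup (Fin 2)))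

/-- The images of the generators in `G(l,k)`. -/
def A (l k : ℤ) : G l k := PresentedGroup.of 0
def B (l k : ℤ) : G l k := PresentedGroup.of 1

/-- In `G(l, l+1)` with `l ≠ 0`, the element `a` satisfies `a = [aˡ, a^b]`,
hence lies in every term of the derived series. -/
theorem stmt2 (l k : ℤ) (hl : l ≠ 0) (hk : k = l + 1) :
    (A l k = (A l k ^ l)⁻¹ * ((B l k)⁻¹ * A l k * B l k)⁻¹ * (A l k ^ l) *
      ((B l k)⁻¹ * A l k * B l k)) ∧
    (∀ n : ℕ, A l k ∈ derivedSeries (G l k) n) := by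
  set π := QuotientGroup.mk' (Subgroup.normalClosure ({rel l k} : Set (FreeGroup (Fin 2)))) with hπ
  have h1 : π (rel l k) = 1 := by
    rw [QuotientGroup.mk'_apply, QuotientGroup.eq_one_iff]
    exact Subgroup.subset_normalClosure (Set.mem_singleton _)
  have hA : A l k = π a := rfl
  have hB : B l k = π b := rfl
  have hrel : ((B l k)⁻¹ * A l k * B l k)⁻¹ * (A l k) ^ l * ((B l k)⁻¹ * A l k * B l k)
      * (A l k) ^ (-k) = 1 := by
    rw [hA, hB]
    have h1' := h1
    simp only [rel, map_mul, map_inv, map_zpow] at h1'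
    exact h1'
  have hrel2 : ((B l k)⁻¹ * A l k * B l k)⁻¹ * (A l k) ^ l * ((B l k)⁻¹ * A l k * B l k)
      = (A l k) ^ k := by
    have := mul_eq_one_iff_eq_inv.mp hrel
    rw [this, ← zpow_neg, neg_neg]
  have hmain : A l k = (A l k ^ l)⁻¹ * ((B l k)⁻¹ * A l k * B l k)⁻¹ * (A l k ^ l) *
      ((B l k)⁻¹ * A l k * B l k) := by
    rw [mul_assoc, mul_assoc, ← mul_assoc (((B l k)⁻¹ * A l k * B l k)⁻¹), hrel2, hk,
      ← zpow_neg, ← zpow_add]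
    simp
  refine ⟨hmain, ?_⟩
  intro n
  induction n with
  | zero => exact Subgroup.mem_top _
  | succ n ih =>
    have hc : (B l k)⁻¹ * A l k * B l k ∈ derivedSeries (G l k) n := by
      have : Subgroup.Normal (derivedSeries (G l k) n) := derivedSeries_normal _ _
      simpa [mul_assoc] using this.conj_mem _ ih ((B l k)⁻¹)
    have hl' : (A l k) ^ l ∈ derivedSeries (G l k) n := Subgroup.zpow_mem _ ih l
    have : @Bracket.bracket (G l k) (G l k) commutatorElement ((A l k) ^ l)⁻¹ ((B l k)⁻¹ * A l k * B l k)⁻¹ ∈ derivedSeries (G l k) (n + 1) :=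
      Subgroup.commutator_mem_commutator (inv_mem hl') (inv_mem hc)
    rwa [commutatorElement_def, inv_inv, inv_inv, ← hmain] at this

end Stmt2
end
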